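/- Let α > 0 and let u : (0,∞) → ℝ be continuously differentiable with compact support. Viewing u as a radial function on ℝ², there exists a constant C̃ > 0, independent of u, such that for all r ≥ 1, |u(r)| ≤ (C̃ / r^{(α+2)/4}) · (‖∇u‖_{L²(ℝ²)}² + ∫_{ℝ²}(1+|x|^α)u(|x|)² dx)^{1/2}. -/

import Mathlib

open MeasureTheory

theorem stmt4 (α : ℝ) (hα : 0 < α) :
    ∃ C > 0, ∀ u : ℝ → ℝ, ContDiff ℝ 1 u → HasCompactSupport u →
      ∀ r : ℝ, 1 ≤ r →
        |u r| ≤ (C / r ^ ((α + 2) / 4)) *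
          Real.sqrt ((2 * Real.pi * ∫ s in Set.Ioi (0:ℝ), (deriv u s) ^ 2 * s)
            + 2 * Real.pi * ∫ s in Set.Ioi (0:ℝ), (1 + s ^ α) * u s ^ 2 * s) := by
  have h2π : (0:ℝ) < 2 * Real.pi := by positivity
  refine ⟨1 / Real.sqrt (2 * Real.pi), by positivity, ?_⟩
  intro u hu hsupp r hr
  have hr0 : (0:ℝ) < r := lt_of_lt_of_le one_pos hr
  have hcu : Continuous u := hu.continuous
  have hcu' : Continuous (deriv u) := hu.continuous_deriv le_rfl
  have hdsupp : HasCompactSupport (deriv u) := hsupp.deriv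
  have hrpow : Continuous fun s : ℝ => s ^ α := by
    rw [continuous_iff_continuousAt]
    intro x
    exact Real.continuousAt_rpow_const x α (Or.inr hα.le)
  -- integrability of f and g
  have hf_int : Integrable (fun s : ℝ => (deriv u s) ^ 2 * s) := by
    apply Continuous.integrable_of_hasCompactSupport (by continuity)
    apply hdsupp.mono
    intro x hx
    simp only [Function.mem_support, ne_eq] at hx ⊢
    intro h0
    exact hx (by rw [h0]; ring)
  have hg_int : Integrable (fun s : ℝ => (1 + s ^ α) * u s ^ 2 * s) := by
    apply Continuous.integrable_of_hasCompactSupport (by continuity)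
    apply hsupp.mono
    intro x hx
    simp only [Function.mem_support, ne_eq] at hx ⊢
    intro h0
    exact hx (by rw [h0]; ring)
  set A := ∫ s in Set.Ioi (0:ℝ), (deriv u s) ^ 2 * s with hA
  set B := ∫ s in Set.Ioi (0:ℝ), (1 + s ^ α) * u s ^ 2 * s with hB
  -- FTC for u^2
  have hu2 : ContDiff ℝ 1 (fun s => u s ^ 2) := hu.pow 2
  have hu2supp : HasCompactSupport (fun s => u s ^ 2) := by
    apply hsupp.mono
    intro x hx
    simp only [Function.mem_support, ne_eq] at hx ⊢
    intro h0
    exact hx (by rw [h0]; ring)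
  have hftc : ∫ s in Set.Ioi r, deriv (fun s => u s ^ 2) s = - u r ^ 2 :=
    hu2supp.integral_Ioi_deriv_eq hu2 r
  have hderiv2 : ∀ s : ℝ, deriv (fun s => u s ^ 2) s = 2 * u s * deriv u s := by
    intro s
    have := ((hu.differentiable one_ne_zero s).hasDerivAt.pow 2).deriv
    rw [show (fun s => u s ^ 2) = u ^ 2 from rfl, this]; norm_num
  have hftc' : ∫ s in Set.Ioi r, 2 * u s * deriv u s = - u r ^ 2 := by
    rw [← hftc]
    exact setIntegral_congr_fun measurableSet_Ioi fun s _ => (hderiv2 s).symm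
  -- pointwise bound on Ioi r
  set p := (α + 2) / 2 with hp
  have hrp : (0:ℝ) < r ^ p := Real.rpow_pos_of_pos hr0 p
  have hpt : ∀ s ∈ Set.Ioi r, -(2 * u s * deriv u s) ≤
      ((deriv u s) ^ 2 * s + (1 + s ^ α) * u s ^ 2 * s) / r ^ p := by
    intro s hs
    have hs1 : 1 ≤ s := hr.trans (le_of_lt hs)
    have hs0 : (0:ℝ) < s := lt_of_lt_of_le one_pos hs1
    rw [le_div_iff₀ hrp]
    set a := |deriv u s| * Real.sqrt s with ha
    set b := |u s| * Real.sqrt (s ^ α * s) with hb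
    have ha2 : a ^ 2 = (deriv u s) ^ 2 * s := by
      rw [ha, mul_pow, sq_abs, Real.sq_sqrt hs0.le]
    have hb2 : b ^ 2 = s ^ α * u s ^ 2 * s := by
      rw [hb, mul_pow, sq_abs, Real.sq_sqrt (by positivity)]; ring
    have hab : 2 * a * b ≤ a ^ 2 + b ^ 2 := two_mul_le_add_sq a b
    have hrs : r ^ p ≤ Real.sqrt s * Real.sqrt (s ^ α * s) := by
      have h2 : r ^ α * r * r = r ^ (α + 2 : ℝ) := by
        rw [Real.rpow_add hr0, show ((2:ℝ)) = ((2:ℕ):ℝ) by norm_num, Real.rpow_natCast]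
        ring
      have h1 : r ^ p = Real.sqrt (r ^ α * r * r) := by
        rw [h2, Real.sqrt_eq_rpow, ← Real.rpow_mul hr0.le, hp]
        congr 1
        ring
      rw [h1, ← Real.sqrt_mul (by positivity)]
      apply Real.sqrt_le_sqrt
      have hαle : r ^ α ≤ s ^ α := Real.rpow_le_rpow hr0.le (le_of_lt hs) hα.le
      have hsanng : (0:ℝ) ≤ s ^ α := Real.rpow_nonneg hs0.le α
      have hrsle : r ≤ s := le_of_lt hs
      have hprod : r ^ α * r * r ≤ s ^ α * s * s :=
        mul_le_mul (mul_le_mul hαle hrsle hr0.le hsanng) hrsle hr0.le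
          (mul_nonneg hsanng hs0.le)
      calc r ^ α * r * r ≤ s ^ α * s * s := hprod
        _ = s * (s ^ α * s) := by ring
    have hle : -(2 * u s * deriv u s) ≤ 2 * |u s| * |deriv u s| := by
      calc -(2 * u s * deriv u s) ≤ |2 * u s * deriv u s| := neg_le_abs _
        _ = 2 * |u s| * |deriv u s| := by rw [abs_mul, abs_mul]; simp [abs_of_nonneg]
    calc -(2 * u s * deriv u s) * r ^ p ≤ 2 * |u s| * |deriv u s| * (Real.sqrt s * Real.sqrt (s ^ α * s)) := by
          apply mul_le_mul hle hrs hrp.le (by positivity)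
      _ = 2 * a * b := by rw [ha, hb]; ring
      _ ≤ a ^ 2 + b ^ 2 := hab
      _ = (deriv u s) ^ 2 * s + s ^ α * u s ^ 2 * s := by rw [ha2, hb2]
      _ ≤ (deriv u s) ^ 2 * s + (1 + s ^ α) * u s ^ 2 * s := by nlinarith [sq_nonneg (u s), hs0.le]
  -- integrate the bound
  have hmain : u r ^ 2 ≤ (A + B) / r ^ p := by
    have h1 : u r ^ 2 = ∫ s in Set.Ioi r, -(2 * u s * deriv u s) := by
      rw [integral_neg, hftc', neg_neg]
    rw [h1]
    have hint_rhs : IntegrableOn (fun s : ℝ =>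
        ((deriv u s) ^ 2 * s + (1 + s ^ α) * u s ^ 2 * s) / r ^ p) (Set.Ioi r) :=
      (((hf_int.add hg_int).div_const _).integrableOn)
    have hint_lhs : IntegrableOn (fun s : ℝ => -(2 * u s * deriv u s)) (Set.Ioi r) := by
      apply Integrable.integrableOn
      apply Integrable.neg
      apply Continuous.integrable_of_hasCompactSupport (by continuity)
      apply hdsupp.mono
      intro x hx
      simp only [Function.mem_support, ne_eq] at hx ⊢
      intro h0
      exact hx (by rw [h0]; ring)
    calc ∫ s in Set.Ioi r, -(2 * u s * deriv u s)
        ≤ ∫ s in Set.Ioi r, ((deriv u s) ^ 2 * s + (1 + s ^ α) * u s ^ 2 * s) / r ^ p :=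
          setIntegral_mono_on hint_lhs hint_rhs measurableSet_Ioi hpt
      _ = (∫ s in Set.Ioi r, ((deriv u s) ^ 2 * s + (1 + s ^ α) * u s ^ 2 * s)) / r ^ p := by
          rw [integral_div]
      _ ≤ (∫ s in Set.Ioi 0, ((deriv u s) ^ 2 * s + (1 + s ^ α) * u s ^ 2 * s)) / r ^ p := by
          apply div_le_div_of_nonneg_right ?_ hrp.le
          apply setIntegral_mono_set (hf_int.add hg_int).integrableOn
          · filter_upwards [self_mem_ae_restrict measurableSet_Ioi] with s hs
            have hs0 : (0:ℝ) < s := hs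
            have h1 : (0:ℝ) ≤ s ^ α := Real.rpow_nonneg hs0.le α
            exact add_nonneg (mul_nonneg (sq_nonneg _) hs0.le)
              (mul_nonneg (mul_nonneg (by linarith) (sq_nonneg _)) hs0.le)
          · exact HasSubset.Subset.eventuallyLE (Set.Ioi_subset_Ioi hr0.le)
      _ = (A + B) / r ^ p := by
          rw [integral_add hf_int.integrableOn hg_int.integrableOn]
  -- nonnegativity of A, B
  have hAnn : 0 ≤ A := by
    apply setIntegral_nonneg measurableSet_Ioi
    intro s hs
    have hs0 : (0:ℝ) < s := hs
    exact mul_nonneg (sq_nonneg _) hs0.le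
  have hBnn : 0 ≤ B := by
    apply setIntegral_nonneg measurableSet_Ioi
    intro s hs
    have hs0 : (0:ℝ) < s := hs
    have h1 : (0:ℝ) ≤ s ^ α := Real.rpow_nonneg hs0.le α
    exact mul_nonneg (mul_nonneg (by linarith) (sq_nonneg _)) hs0.le
  -- final arithmetic
  have hq : Real.sqrt (r ^ p) = r ^ ((α + 2) / 4) := by
    rw [Real.sqrt_eq_rpow, ← Real.rpow_mul hr0.le, hp]
    congr 1
    ring
  have h3 : |u r| ≤ Real.sqrt (A + B) / r ^ ((α + 2) / 4) := by
    rw [← Real.sqrt_sq_eq_abs, ← hq, ← Real.sqrt_div (by positivity)]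
    exact Real.sqrt_le_sqrt hmain
  have h4 : Real.sqrt (2 * Real.pi * A + 2 * Real.pi * B)
      = Real.sqrt (2 * Real.pi) * Real.sqrt (A + B) := by
    rw [← Real.sqrt_mul h2π.le]
    ring_nf
  rw [h4]
  have hs2π : (0:ℝ) < Real.sqrt (2 * Real.pi) := Real.sqrt_pos.mpr h2π
  have hrq : (0:ℝ) < r ^ ((α + 2) / 4) := Real.rpow_pos_of_pos hr0 _
  calc |u r| ≤ Real.sqrt (A + B) / r ^ ((α + 2) / 4) := h3
    _ = 1 / Real.sqrt (2 * Real.pi) / r ^ ((α + 2) / 4) *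
        (Real.sqrt (2 * Real.pi) * Real.sqrt (A + B)) := by
        field_simp
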